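/- Let k ≥ 1, let Δ_k = {(y₁,…,y_k) ∈ ℝᵏ : y₁ < y₂ < ⋯ < y_k}, and let q₁ < q₂ < ⋯ < q_k be real numbers. Then there exists a C^∞ function u_k : ℝ × Δ_k → ℝ with the following properties: (a) for each (y₁,…,y_k) ∈ Δ_k, the map x ↦ u_k(x; y₁,…,y_k) is an orientation preserving (i.e. strictly increasing) homeomorphism of ℝ onto ℝ; (b) u_k(x; q₁,…,q_k) = x for all x ∈ ℝ; (c) u_k(y_i; y₁,…,y_k) = q_i for i = 1,…,k and all (y₁,…,y_k) ∈ Δ_k. -/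

import Mathlib

open Real Finset


lemma st_mono : Monotone Real.smoothTransition := by
  intro a b hab
  unfold Real.smoothTransition
  have hg : expNegInvGlue a ≤ expNegInvGlue b := by
    rcases le_or_gt b 0 with h | h
    · rw [expNegInvGlue.zero_of_nonpos h, expNegInvGlue.zero_of_nonpos (hab.trans h)]
    rcases le_or_gt a 0 with h' | h'
    · rw [expNegInvGlue.zero_of_nonpos h']; exact expNegInvGlue.nonneg b
    · have : a ≤ 0 ∨ ¬ a ≤ 0 := em _
      simp only [expNegInvGlue, if_neg h.not_ge, if_neg h'.not_ge]
      apply Real.exp_le_exp.2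
      simp only [neg_le_neg_iff]
      exact inv_anti₀ h' hab
  have hg' : expNegInvGlue (1 - b) ≤ expNegInvGlue (1 - a) := by
    rcases le_or_gt (1-a) 0 with h | h
    · rw [expNegInvGlue.zero_of_nonpos h, expNegInvGlue.zero_of_nonpos (by linarith)]
    rcases le_or_gt (1-b) 0 with h' | h'
    · rw [expNegInvGlue.zero_of_nonpos h']; exact expNegInvGlue.nonneg _
    · simp only [expNegInvGlue, if_neg h.not_ge, if_neg h'.not_ge]
      apply Real.exp_le_exp.2
      simp only [neg_le_neg_iff]
      exact inv_anti₀ h' (by linarith)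
  rw [div_le_div_iff₀ (Real.smoothTransition.pos_denom a) (Real.smoothTransition.pos_denom b)]
  have h1 : 0 ≤ expNegInvGlue a := expNegInvGlue.nonneg a
  have h2 : 0 ≤ expNegInvGlue (1 - b) := expNegInvGlue.nonneg _
  nlinarith [expNegInvGlue.nonneg b, expNegInvGlue.nonneg (1-a)]

noncomputable def psi (t : ℝ) : ℝ := ∫ s in (0:ℝ)..t, Real.smoothTransition s

lemma psi_hasDerivAt (t : ℝ) : HasDerivAt psi (Real.smoothTransition t) t :=
  intervalIntegral.integral_hasDerivAt_right
    (Real.smoothTransition.continuous.intervalIntegrable _ _)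
    (Real.smoothTransition.continuous.stronglyMeasurableAtFilter _ _)
    Real.smoothTransition.continuousAt

lemma psi_contDiff : ContDiff ℝ (⊤ : ℕ∞) psi := by
  rw [show ((⊤:ℕ∞) : WithTop ℕ∞) = (⊤:ℕ∞) from rfl]
  refine contDiff_infty_iff_deriv.2 ⟨fun t => (psi_hasDerivAt t).differentiableAt, ?_⟩
  have : deriv psi = Real.smoothTransition := funext fun t => (psi_hasDerivAt t).deriv
  rw [this]
  exact Real.smoothTransition.contDiff

lemma psi_nonpos {t : ℝ} (h : t ≤ 0) : psi t = 0 := by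
  unfold psi
  rw [intervalIntegral.integral_congr (g := fun _ => (0:ℝ))
    (fun s hs => Real.smoothTransition.zero_of_nonpos (by
      rcases hs with ⟨h1, h2⟩
      simp only [min_def, max_def] at h1 h2
      split_ifs at h1 h2 <;> linarith))]
  simp

lemma psi_one_le {t : ℝ} (h : 1 ≤ t) : psi t = psi 1 + (t - 1) := by
  unfold psi
  rw [← intervalIntegral.integral_add_adjacent_intervals
    (Real.smoothTransition.continuous.intervalIntegrable 0 1)
    (Real.smoothTransition.continuous.intervalIntegrable 1 t)]
  congr 1
  rw [intervalIntegral.integral_congr (g := fun _ => (1:ℝ))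
    (fun s hs => Real.smoothTransition.one_of_one_le (by
      rcases hs with ⟨h1, h2⟩
      simp only [min_def, max_def] at h1 h2
      split_ifs at h1 h2 <;> linarith))]
  simp




section
variable {k : ℕ}

noncomputable def at' (y : Fin k → ℝ) (n : ℕ) : ℝ := if h : n < k then y ⟨n, h⟩ else 0
noncomputable def gp (y : Fin k → ℝ) (i : ℕ) : ℝ := at' y (i+1) - at' y i
noncomputable def eps (q y : Fin k → ℝ) (i : ℕ) : ℝ :=
  gp q i * gp y i / (2 * (gp q i + gp y i))
noncomputable def cf (q y : Fin k → ℝ) (i : ℕ) : ℝ :=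
  (gp q i - gp y i) / (gp y i - eps q y i)
noncomputable def uu (q : Fin k → ℝ) (x : ℝ) (y : Fin k → ℝ) : ℝ :=
  (at' q 0 - at' y 0) + x + ∑ i ∈ Finset.range (k-1),
    cf q y i * (eps q y i *
      (psi ((x - at' y i) / eps q y i) - psi ((x - at' y (i+1) + eps q y i) / eps q y i)))


lemma at'_eq (y : Fin k → ℝ) {n : ℕ} (h : n < k) : at' y n = y ⟨n, h⟩ := dif_pos h

lemma at'_le {y : Fin k → ℝ} (hy : StrictMono y) {m n : ℕ} (hmn : m ≤ n) (hn : n < k) :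
    at' y m ≤ at' y n := by
  rw [at'_eq y hn, at'_eq y (lt_of_le_of_lt hmn hn)]
  exact hy.monotone (by simp [Fin.le_def]; omega)

lemma at'_lt {y : Fin k → ℝ} (hy : StrictMono y) {m n : ℕ} (hmn : m < n) (hn : n < k) :
    at' y m < at' y n := by
  rw [at'_eq y hn, at'_eq y (hmn.trans hn)]
  exact hy (by simp [Fin.lt_def]; omega)

lemma gp_pos {y : Fin k → ℝ} (hy : StrictMono y) {i : ℕ} (hi : i + 1 < k) : 0 < gp y i :=
  sub_pos.2 (at'_lt hy (Nat.lt_succ_self i) hi)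


variable {q y : Fin k → ℝ} {i : ℕ}

lemma eps_pos (hq : StrictMono q) (hy : StrictMono y) (hi : i + 1 < k) : 0 < eps q y i := by
  have a := gp_pos hq hi; have b := gp_pos hy hi
  exact div_pos (by positivity) (by positivity)

lemma eps_lt_gq (hq : StrictMono q) (hy : StrictMono y) (hi : i + 1 < k) :
    eps q y i < gp q i := by
  have a := gp_pos hq hi; have b := gp_pos hy hi
  rw [eps, div_lt_iff₀ (by positivity)]
  nlinarith

lemma eps_lt_gy (hq : StrictMono q) (hy : StrictMono y) (hi : i + 1 < k) :
    eps q y i < gp y i := by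
  have a := gp_pos hq hi; have b := gp_pos hy hi
  rw [eps, div_lt_iff₀ (by positivity)]
  nlinarith

lemma denom_pos (hq : StrictMono q) (hy : StrictMono y) (hi : i + 1 < k) :
    0 < gp y i - eps q y i := sub_pos.2 (eps_lt_gy hq hy hi)

lemma term_zero (hq : StrictMono q) (hy : StrictMono y) (hi : i + 1 < k) {x : ℝ}
    (hx : x ≤ at' y i) :
    psi ((x - at' y i) / eps q y i) - psi ((x - at' y (i+1) + eps q y i) / eps q y i) = 0 := by
  have he := eps_pos hq hy hi
  have hgy : eps q y i < gp y i := eps_lt_gy hq hy hi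
  rw [psi_nonpos (div_nonpos_of_nonpos_of_nonneg (by linarith) he.le),
      psi_nonpos (div_nonpos_of_nonpos_of_nonneg (by simp only [gp] at hgy; linarith) he.le),
      sub_self]

lemma term_full (hq : StrictMono q) (hy : StrictMono y) (hi : i + 1 < k) {x : ℝ}
    (hx : at' y (i+1) ≤ x) :
    eps q y i * (psi ((x - at' y i) / eps q y i)
      - psi ((x - at' y (i+1) + eps q y i) / eps q y i)) = gp y i - eps q y i := by
  have he := eps_pos hq hy hi
  have hgy : eps q y i < gp y i := eps_lt_gy hq hy hi
  have h1 : (1:ℝ) ≤ (x - at' y i) / eps q y i := by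
    rw [le_div_iff₀ he]; simp only [gp] at hgy; linarith
  have h2 : (1:ℝ) ≤ (x - at' y (i+1) + eps q y i) / eps q y i := by
    rw [le_div_iff₀ he]; linarith
  rw [psi_one_le h1, psi_one_le h2]
  field_simp
  simp only [gp]; ring

end


section
variable {k : ℕ} {q y : Fin k → ℝ} {i : ℕ}

lemma uu_knot (hk : 1 ≤ k) (hq : StrictMono q) (hy : StrictMono y) {j : ℕ} (hj : j < k) :
    uu q (at' y j) y = at' q j := by
  unfold uu
  have hsum : ∑ i ∈ Finset.range (k-1),
      cf q y i * (eps q y i *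
        (psi ((at' y j - at' y i) / eps q y i)
          - psi ((at' y j - at' y (i+1) + eps q y i) / eps q y i)))
      = ∑ i ∈ Finset.range j, (gp q i - gp y i) := by
    rw [← Finset.sum_subset (Finset.range_subset_range.2 (by omega : j ≤ k - 1))]
    · apply Finset.sum_congr rfl
      intro i hi
      simp only [Finset.mem_range] at hi
      have hik : i + 1 < k := by omega
      have hx : at' y (i+1) ≤ at' y j := at'_le hy (by omega) hj
      rw [term_full hq hy hik hx, cf, div_mul_cancel₀ _ (denom_pos hq hy hik).ne']
    · intro i hi hij
      simp only [Finset.mem_range] at hi hij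
      have hik : i + 1 < k := by omega
      have hx : at' y j ≤ at' y i := at'_le hy (by omega) (by omega)
      rw [term_zero hq hy hik hx, mul_zero, mul_zero]
  rw [hsum, Finset.sum_sub_distrib]
  have t1 : ∑ i ∈ Finset.range j, gp q i = at' q j - at' q 0 := Finset.sum_range_sub _ j
  have t2 : ∑ i ∈ Finset.range j, gp y i = at' y j - at' y 0 := Finset.sum_range_sub _ j
  rw [t1, t2]; ring

lemma uu_low (hq : StrictMono q) (hy : StrictMono y) {x : ℝ} (hx : x ≤ at' y 0) :
    uu q x y = (at' q 0 - at' y 0) + x := by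
  unfold uu
  rw [Finset.sum_eq_zero, add_zero]
  intro i hi
  simp only [Finset.mem_range] at hi
  have hik : i + 1 < k := by omega
  have : x ≤ at' y i := le_trans hx (at'_le hy (Nat.zero_le i) (by omega))
  rw [term_zero hq hy hik this, mul_zero, mul_zero]

lemma uu_high (hk : 1 ≤ k) (hq : StrictMono q) (hy : StrictMono y) {x : ℝ}
    (hx : at' y (k-1) ≤ x) :
    uu q x y = x + (at' q (k-1) - at' y (k-1)) := by
  unfold uu
  have hsum : ∑ i ∈ Finset.range (k-1),
      cf q y i * (eps q y i *
        (psi ((x - at' y i) / eps q y i) - psi ((x - at' y (i+1) + eps q y i) / eps q y i)))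
      = ∑ i ∈ Finset.range (k-1), (gp q i - gp y i) := by
    apply Finset.sum_congr rfl
    intro i hi
    simp only [Finset.mem_range] at hi
    have hik : i + 1 < k := by omega
    have : at' y (i+1) ≤ x := le_trans (at'_le hy (by omega) (by omega)) hx
    rw [term_full hq hy hik this, cf, div_mul_cancel₀ _ (denom_pos hq hy hik).ne']
  have t1 : ∑ i ∈ Finset.range (k-1), gp q i = at' q (k-1) - at' q 0 :=
    Finset.sum_range_sub _ _
  have t2 : ∑ i ∈ Finset.range (k-1), gp y i = at' y (k-1) - at' y 0 :=
    Finset.sum_range_sub _ _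
  rw [hsum, Finset.sum_sub_distrib, t1, t2]
  ring

lemma uu_self (x : ℝ) : uu q x q = x := by
  unfold uu
  rw [Finset.sum_eq_zero, sub_self, zero_add, add_zero]
  intro i _
  rw [cf, sub_self, zero_div, zero_mul]

end



section
variable {k : ℕ} {q y : Fin k → ℝ} {i : ℕ}

lemma uu_hasDerivAt (hq : StrictMono q) (hy : StrictMono y) (x : ℝ) :
    HasDerivAt (fun x => uu q x y)
      (1 + ∑ i ∈ Finset.range (k-1), cf q y i *
        (Real.smoothTransition ((x - at' y i) / eps q y i)
          - Real.smoothTransition ((x - at' y (i+1) + eps q y i) / eps q y i))) x := by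
  have hmain : ∀ i ∈ Finset.range (k-1),
      HasDerivAt (fun x => cf q y i * (eps q y i *
        (psi ((x - at' y i) / eps q y i) - psi ((x - at' y (i+1) + eps q y i) / eps q y i))))
      (cf q y i * (Real.smoothTransition ((x - at' y i) / eps q y i)
          - Real.smoothTransition ((x - at' y (i+1) + eps q y i) / eps q y i))) x := by
    intro i hi
    simp only [Finset.mem_range] at hi
    have he : eps q y i ≠ 0 := (eps_pos hq hy (by omega)).ne'
    have hA : HasDerivAt (fun x : ℝ => (x - at' y i) / eps q y i) (1 / eps q y i) x :=
      ((hasDerivAt_id x).sub_const _).div_const _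
    have hB : HasDerivAt (fun x : ℝ => (x - at' y (i+1) + eps q y i) / eps q y i)
        (1 / eps q y i) x :=
      (((hasDerivAt_id x).sub_const _).add_const _).div_const _
    have hPA := (psi_hasDerivAt ((x - at' y i) / eps q y i)).comp x hA
    have hPB := (psi_hasDerivAt ((x - at' y (i+1) + eps q y i) / eps q y i)).comp x hB
    have := ((hPA.sub hPB).const_mul (eps q y i)).const_mul (cf q y i)
    convert this using 1
    · rfl
    · rfl
    · rfl
    · rw [← sub_mul, mul_left_comm (eps q y i), mul_one_div_cancel he, mul_one]
  have base : HasDerivAt (fun x : ℝ => (at' q 0 - at' y 0) + x) 1 x :=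
    (hasDerivAt_id x).const_add _
  have := base.add (HasDerivAt.fun_sum hmain)
  exact this

lemma deriv_uu_pos (hq : StrictMono q) (hy : StrictMono y) (x : ℝ) :
    0 < 1 + ∑ i ∈ Finset.range (k-1), cf q y i *
        (Real.smoothTransition ((x - at' y i) / eps q y i)
          - Real.smoothTransition ((x - at' y (i+1) + eps q y i) / eps q y i)) := by
  have hzero : ∀ i, i + 1 < k → (x ≤ at' y i ∨ at' y (i+1) ≤ x) →
      Real.smoothTransition ((x - at' y i) / eps q y i)
        - Real.smoothTransition ((x - at' y (i+1) + eps q y i) / eps q y i) = 0 := by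
    intro i hik hcase
    have he := eps_pos hq hy hik
    have hgy : eps q y i < gp y i := eps_lt_gy hq hy hik
    rcases hcase with h | h
    · rw [Real.smoothTransition.zero_of_nonpos
        (div_nonpos_of_nonpos_of_nonneg (by linarith) he.le),
        Real.smoothTransition.zero_of_nonpos
        (div_nonpos_of_nonpos_of_nonneg (by simp only [gp] at hgy; linarith) he.le), sub_self]
    · rw [Real.smoothTransition.one_of_one_le
        (by rw [le_div_iff₀ he]; simp only [gp] at hgy; linarith),
        Real.smoothTransition.one_of_one_le (by rw [le_div_iff₀ he]; linarith), sub_self]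
  by_cases hex : ∃ i ∈ Finset.range (k-1), at' y i < x ∧ x < at' y (i+1)
  · obtain ⟨i₀, hi₀mem, hlt1, hlt2⟩ := hex
    simp only [Finset.mem_range] at hi₀mem
    have hik : i₀ + 1 < k := by omega
    rw [Finset.sum_eq_single_of_mem i₀ (Finset.mem_range.2 hi₀mem)]
    · have he := eps_pos hq hy hik
      have hgy := eps_lt_gy hq hy hik
      have hgq := eps_lt_gq hq hy hik
      have hd := denom_pos hq hy hik
      set A := (x - at' y i₀) / eps q y i₀ with hAdef
      set B := (x - at' y (i₀+1) + eps q y i₀) / eps q y i₀ with hBdef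
      have hAB : B ≤ A := by
        rw [hAdef, hBdef, div_le_div_iff_of_pos_right he]
        simp only [gp] at hgy; linarith
      have hphi0 : 0 ≤ Real.smoothTransition A - Real.smoothTransition B :=
        sub_nonneg.2 (st_mono hAB)
      have hphi1 : Real.smoothTransition A - Real.smoothTransition B ≤ 1 := by
        have := Real.smoothTransition.le_one A
        have := Real.smoothTransition.nonneg B
        linarith
      rcases le_or_gt 0 (cf q y i₀) with hcf | hcf
      · nlinarith [mul_nonneg hcf hphi0]
      · have hcfgt : (-1 : ℝ) < cf q y i₀ := by
          rw [cf, lt_div_iff₀ hd]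
          linarith
        nlinarith [mul_le_mul_of_nonpos_left hphi1 hcf.le]
    · intro i hi hne
      simp only [Finset.mem_range] at hi
      have hik' : i + 1 < k := by omega
      rw [hzero i hik' ?_, mul_zero]
      rcases lt_or_gt_of_ne hne with h | h
      · right; exact le_trans (at'_le hy (by omega) (by omega)) hlt1.le
      · left; exact le_trans hlt2.le (at'_le hy (by omega) (by omega))
  · push_neg at hex
    rw [Finset.sum_eq_zero, add_zero]; · norm_num
    intro i hi
    simp only [Finset.mem_range] at hi
    have hik : i + 1 < k := by omega
    rw [hzero i hik ?_, mul_zero]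
    rcases le_or_gt x (at' y i) with h | h
    · exact Or.inl h
    · exact Or.inr (hex i (Finset.mem_range.2 hi) h)

end



section
variable {k : ℕ} {q y : Fin k → ℝ} {i : ℕ}

lemma uu_strictMono (hq : StrictMono q) (hy : StrictMono y) :
    StrictMono (fun x => uu q x y) :=
  strictMono_of_deriv_pos fun x => by
    rw [(uu_hasDerivAt hq hy x).deriv]; exact deriv_uu_pos hq hy x

lemma uu_continuous (hq : StrictMono q) (hy : StrictMono y) :
    Continuous (fun x => uu q x y) := by
  have : Differentiable ℝ (fun x => uu q x y) :=
    fun x => (uu_hasDerivAt hq hy x).differentiableAt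
  exact this.continuous

lemma uu_surjective (hk : 1 ≤ k) (hq : StrictMono q) (hy : StrictMono y) :
    Function.Surjective (fun x => uu q x y) := by
  intro z
  set a := min (at' y 0) (z - (at' q 0 - at' y 0)) with hadef
  set b := max (at' y (k-1)) (z - (at' q (k-1) - at' y (k-1))) with hbdef
  have ha : uu q a y ≤ z := by
    rw [uu_low hq hy (min_le_left _ _)]
    have := min_le_right (at' y 0) (z - (at' q 0 - at' y 0))
    linarith
  have hb : z ≤ uu q b y := by
    rw [uu_high hk hq hy (le_max_left _ _)]
    have := le_max_right (at' y (k-1)) (z - (at' q (k-1) - at' y (k-1)))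
    linarith
  have hab : a ≤ b :=
    le_trans (min_le_left _ _)
      (le_trans (at'_le hy (Nat.zero_le _) (by omega)) (le_max_left _ _))
  have := intermediate_value_Icc hab ((uu_continuous hq hy).continuousOn)
  obtain ⟨x, -, hx⟩ := this ⟨ha, hb⟩
  exact ⟨x, hx⟩

lemma contDiff_at' (n : ℕ) :
    ContDiff ℝ (⊤ : ℕ∞) (fun p : ℝ × (Fin k → ℝ) => at' p.2 n) := by
  unfold at'
  by_cases h : n < k
  · simp only [dif_pos h]
    exact contDiff_pi.1 contDiff_snd _
  · simp only [dif_neg h]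
    exact contDiff_const

lemma uu_contDiffOn (hq : StrictMono q) :
    ContDiffOn ℝ (⊤ : ℕ∞) (fun p : ℝ × (Fin k → ℝ) => uu q p.1 p.2)
      {p : ℝ × (Fin k → ℝ) | StrictMono p.2} := by
  set S := {p : ℝ × (Fin k → ℝ) | StrictMono p.2}
  have hgy : ∀ i, ContDiffOn ℝ (⊤ : ℕ∞) (fun p : ℝ × (Fin k → ℝ) => gp p.2 i) S := by
    intro i
    exact ((contDiff_at' (i+1)).sub (contDiff_at' i)).contDiffOn
  have hgypos : ∀ i, i + 1 < k → ∀ p ∈ S, 0 < gp (Prod.snd p) i := by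
    intro i hi p hp
    exact gp_pos hp hi
  have heps : ∀ i, i + 1 < k →
      ContDiffOn ℝ (⊤ : ℕ∞) (fun p : ℝ × (Fin k → ℝ) => eps q p.2 i) S := by
    intro i hi
    apply ContDiffOn.div (contDiffOn_const.mul (hgy i))
      (contDiffOn_const.mul (contDiffOn_const.add (hgy i)))
    intro p hp
    have h1 := gp_pos hq hi
    have h2 := hgypos i hi p hp
    positivity
  have hepspos : ∀ i, i + 1 < k → ∀ p ∈ S, 0 < eps q p.2 i := fun i hi p hp =>
    eps_pos hq hp hi
  apply ContDiffOn.add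
  · apply ContDiffOn.add
    · exact ((contDiff_const (c := at' q 0)).sub (contDiff_at' 0)).contDiffOn
    · exact contDiff_fst.contDiffOn
  · apply ContDiffOn.sum
    intro i hi
    simp only [Finset.mem_range] at hi
    have hik : i + 1 < k := by omega
    apply ContDiffOn.mul
    · -- cf
      apply ContDiffOn.div (contDiffOn_const.sub (hgy i))
        ((hgy i).sub (heps i hik))
      intro p hp
      exact (denom_pos hq hp hik).ne'
    · apply ContDiffOn.mul (heps i hik)
      apply ContDiffOn.sub
      · apply psi_contDiff.comp_contDiffOn
        apply ContDiffOn.div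
          (contDiff_fst.contDiffOn.sub (contDiff_at' i).contDiffOn) (heps i hik)
        intro p hp
        exact (hepspos i hik p hp).ne'
      · apply psi_contDiff.comp_contDiffOn
        apply ContDiffOn.div
          (ContDiffOn.add (contDiff_fst.contDiffOn.sub (contDiff_at' (i+1)).contDiffOn)
            (heps i hik)) (heps i hik)
        intro p hp
        exact (hepspos i hik p hp).ne'

end


/-- for `k ≥ 1` and `q₁ < ⋯ < q_k`, there is a `C^∞` function
`u : ℝ × Δ_k → ℝ` (here defined on all of `ℝ × ℝᵏ` and smooth on `ℝ × Δ_k`, where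
`Δ_k = {y : y₁ < ⋯ < y_k}`) such that (a) `x ↦ u x y` is a strictly increasing
homeomorphism of `ℝ` onto `ℝ` for each `y ∈ Δ_k`; (b) `u x q = x`; and
(c) `u (y i) y = q i`. -/
theorem stmt15 (k : ℕ) (hk : 1 ≤ k) (q : Fin k → ℝ) (hq : StrictMono q) :
    ∃ u : ℝ → (Fin k → ℝ) → ℝ,
      ContDiffOn ℝ (⊤ : ℕ∞)
        (fun p : ℝ × (Fin k → ℝ) => u p.1 p.2)
        {p : ℝ × (Fin k → ℝ) | StrictMono p.2} ∧
      (∀ y : Fin k → ℝ, StrictMono y →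
        StrictMono (fun x => u x y) ∧ Function.Surjective (fun x => u x y)) ∧
      (∀ x : ℝ, u x q = x) ∧
      (∀ y : Fin k → ℝ, StrictMono y → ∀ i : Fin k, u (y i) y = q i) := by
  refine ⟨uu q, uu_contDiffOn hq,
    fun y hy => ⟨uu_strictMono hq hy, uu_surjective hk hq hy⟩,
    fun x => uu_self x, ?_⟩
  intro y hy i
  have h1 : y i = at' y i.val := by
    rw [at'_eq y i.isLt]
  have h2 : q i = at' q i.val := by
    rw [at'_eq q i.isLt]
  rw [h1, h2, uu_knot hk hq hy i.isLt]
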